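/- Let g be a finite-dimensional real Lie algebra equipped with an inner product ⟨·,·⟩. There exists a bilinear product · on g satisfying, for all x,y,z ∈ g: x·y − y·x = ⁅x,y⁆, ⟨x·y, z⟩ + ⟨y, x·z⟩ = 0, and L_⁅x,y⁆ = L_x ∘ L_y − L_y ∘ L_x (where L_x(y) = x·y) if and only if g decomposes as an orthogonal direct sum g = b ⊕ u, where b is an abelian Lie subalgebra, u is an abelian Lie ideal, and for every b ∈ b the map ad_b is skew-adjoint with respect to ⟨·,·⟩, i.e. ⟨⁅b,x⁆, y⟩ + ⟨x, ⁅b,y⁆⟩ = 0 for all x,y ∈ g. (Milnor: a left-invariant Riemannian metric on a Lie group is flat if and only if its Lie algebra has such a decomposition.) -/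

import Mathlib

set_option linter.unusedSectionVars false
set_option maxHeartbeats 1000000

open Module LinearMap

section Aux

variable {V : Type*} [AddCommGroup V] [Module ℝ V] [FiniteDimensional ℝ V]

/-- A positive definite symmetric bilinear form admits an orthonormal basis. -/
lemma milnor_exists_onb (B : LinearMap.BilinForm ℝ V)
    (hsymm : ∀ x y : V, B x y = B y x) (hpos : ∀ x : V, x ≠ 0 → 0 < B x x) :
    ∃ e : Basis (Fin (Module.finrank ℝ V)) ℝ V,
      ∀ i j, B (e i) (e j) = if i = j then 1 else 0 := by
  obtain ⟨v, hv⟩ := LinearMap.BilinForm.exists_orthogonal_basis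
      (B := B) ⟨fun x y => hsymm x y⟩
  have hvpos : ∀ i, 0 < B (v i) (v i) := fun i => hpos _ (v.ne_zero i)
  have hsq : ∀ i, (0:ℝ) < Real.sqrt (B (v i) (v i)) :=
    fun i => Real.sqrt_pos.mpr (hvpos i)
  refine ⟨v.unitsSMul (fun i => Units.mk0 (Real.sqrt (B (v i) (v i)))⁻¹
      (inv_ne_zero (ne_of_gt (hsq i)))), ?_⟩
  intro i j
  rw [Basis.unitsSMul_apply, Basis.unitsSMul_apply]
  simp only [Units.smul_mk0, map_smul, LinearMap.smul_apply, smul_eq_mul,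
    Units.smul_def, map_smul]
  by_cases h : i = j
  · subst h
    rw [if_pos rfl]
    simp only [Units.val_mk0]
    rw [← mul_assoc, ← mul_inv, Real.mul_self_sqrt (hvpos i).le]
    exact inv_mul_cancel₀ (ne_of_gt (hvpos i))
  · rw [if_neg h]
    rw [LinearMap.BilinForm.iIsOrtho_def.mp hv i j h]
    ring


variable {ι : Type*} [Fintype ι] [DecidableEq ι]

lemma milnor_onb_repr (B : LinearMap.BilinForm ℝ V) (e : Basis ι ℝ V)
    (he : ∀ i j, B (e i) (e j) = if i = j then 1 else 0) (v : V) (i : ι) :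
    e.repr v i = B v (e i) := by
  conv_rhs => rw [← e.sum_repr v]
  rw [map_sum, LinearMap.sum_apply]
  simp only [map_smul, LinearMap.smul_apply, smul_eq_mul]
  rw [Finset.sum_eq_single i]
  · rw [he i i, if_pos rfl, mul_one]
  · intro j _ hj
    rw [he j i, if_neg hj, mul_zero]
  · intro hi; exact absurd (Finset.mem_univ i) hi

lemma milnor_onb_expand (B : LinearMap.BilinForm ℝ V) (e : Basis ι ℝ V)
    (he : ∀ i j, B (e i) (e j) = if i = j then 1 else 0) (v : V) :
    v = ∑ i, B v (e i) • e i := by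
  conv_lhs => rw [← e.sum_repr v]
  exact Finset.sum_congr rfl fun i _ => by rw [milnor_onb_repr B e he v i]

lemma milnor_trace_onb (B : LinearMap.BilinForm ℝ V) (e : Basis ι ℝ V)
    (he : ∀ i j, B (e i) (e j) = if i = j then 1 else 0) (f : V →ₗ[ℝ] V) :
    LinearMap.trace ℝ V f = ∑ i, B (f (e i)) (e i) := by
  rw [LinearMap.trace_eq_matrix_trace ℝ e f, Matrix.trace]
  refine Finset.sum_congr rfl fun i _ => ?_
  rw [Matrix.diag_apply, LinearMap.toMatrix_apply, milnor_onb_repr B e he]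

/-- trace of a `B`-skew operator is zero -/
lemma milnor_skew_trace (B : LinearMap.BilinForm ℝ V)
    (hsymm : ∀ x y : V, B x y = B y x) (hpos : ∀ x : V, x ≠ 0 → 0 < B x x)
    (f : V →ₗ[ℝ] V) (hf : ∀ x y, B (f x) y + B x (f y) = 0) :
    LinearMap.trace ℝ V f = 0 := by
  obtain ⟨e, he⟩ := milnor_exists_onb B hsymm hpos
  rw [milnor_trace_onb B e he f]
  refine Finset.sum_eq_zero fun i _ => ?_
  have h1 := hf (e i) (e i)
  rw [hsymm (e i) (f (e i))] at h1
  linarith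

omit [FiniteDimensional ℝ V] in
lemma milnor_B_nonneg (B : LinearMap.BilinForm ℝ V)
    (hpos : ∀ x : V, x ≠ 0 → 0 < B x x) (v : V) : 0 ≤ B v v := by
  by_cases h : v = 0
  · subst h; simp
  · exact (hpos v h).le

/-- trace of the square of a `B`-skew operator is nonpositive, and zero only for `f = 0`. -/
lemma milnor_skew_sq_trace (B : LinearMap.BilinForm ℝ V)
    (hsymm : ∀ x y : V, B x y = B y x) (hpos : ∀ x : V, x ≠ 0 → 0 < B x x)
    (f : V →ₗ[ℝ] V) (hf : ∀ x y, B (f x) y + B x (f y) = 0) :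
    LinearMap.trace ℝ V (f ∘ₗ f) ≤ 0 ∧
      (LinearMap.trace ℝ V (f ∘ₗ f) = 0 → f = 0) := by
  obtain ⟨e, he⟩ := milnor_exists_onb B hsymm hpos
  have key : LinearMap.trace ℝ V (f ∘ₗ f) = ∑ i, -(B (f (e i)) (f (e i))) := by
    rw [milnor_trace_onb B e he]
    refine Finset.sum_congr rfl fun i _ => ?_
    have h1 := hf (f (e i)) (e i)
    simp only [LinearMap.comp_apply]
    linarith
  constructor
  · rw [key]
    refine Finset.sum_nonpos fun i _ => ?_
    have := milnor_B_nonneg B hpos (f (e i))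
    linarith
  · intro h0
    rw [key] at h0
    have hz : ∀ i ∈ Finset.univ, B (f (e i)) (f (e i)) = 0 := by
      intro i _
      have hsumz : ∑ i, B (f (e i)) (f (e i)) = 0 := by
        have := h0
        rw [Finset.sum_neg_distrib] at this
        linarith [this]
      have := (Finset.sum_eq_zero_iff_of_nonneg
        (fun j _ => milnor_B_nonneg B hpos (f (e j)))).mp hsumz i (Finset.mem_univ i)
      exact this
    apply Basis.ext e
    intro i
    simp only [LinearMap.zero_apply]
    by_contra hne
    exact absurd (hz i (Finset.mem_univ i)) (ne_of_gt (hpos _ hne))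

end Aux

section Core

/-- **Core algebraic lemma.** A finite-dimensional real Lie algebra carrying a flat
metric structure `(Bb, L)` together with an invariant positive definite form `K`
has trivial Levi-Civita product `L = 0`. -/
lemma milnor_core {H : Type*} [LieRing H] [LieAlgebra ℝ H] [FiniteDimensional ℝ H]
    (Bb K : LinearMap.BilinForm ℝ H)
    (hBsymm : ∀ x y : H, Bb x y = Bb y x) (hBpos : ∀ x : H, x ≠ 0 → 0 < Bb x x)
    (hKsymm : ∀ x y : H, K x y = K y x) (hKpos : ∀ x : H, x ≠ 0 → 0 < K x x)
    (hKinv : ∀ x y z : H, K ⁅x, y⁆ z + K y ⁅x, z⁆ = 0)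
    (L : H →ₗ[ℝ] H →ₗ[ℝ] H)
    (hT : ∀ x y : H, L x y - L y x = ⁅x, y⁆)
    (hS : ∀ x y z : H, Bb (L x y) z + Bb y (L x z) = 0)
    (hF : ∀ x y : H, L ⁅x, y⁆ = L x ∘ₗ L y - L y ∘ₗ L x) :
    ∀ x : H, L x = 0 := by
  obtain ⟨e, he⟩ := milnor_exists_onb K hKsymm hKpos
  have hexp : ∀ v : H, v = ∑ j, K v (e j) • e j :=
    fun v => milnor_onb_expand K e he v
  have hLexp₂ : ∀ x u : H, L x u = ∑ j, K u (e j) • L x (e j) := by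
    intro x u
    conv_lhs => rw [hexp u]
    rw [map_sum]
    simp only [map_smul]
  have hLexp₁ : ∀ u y : H, L u y = ∑ j, K u (e j) • L (e j) y := by
    intro u y
    conv_lhs => rw [hexp u]
    rw [map_sum, LinearMap.sum_apply]
    simp only [map_smul, LinearMap.smul_apply]
  set w : H := ∑ i, L (e i) (e i) with hw
  have hc : ∀ A : H, ∀ i j, K ⁅A, e i⁆ (e j) + K ⁅A, e j⁆ (e i) = 0 := by
    intro A i j
    have h := hKinv A (e i) (e j)
    rwa [hKsymm (e i) ⁅A, e j⁆] at h
  -- Claim 1 : L A w = ∑ i, L (e i) (L (e i) A)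
  have claim1 : ∀ A : H, L A w = ∑ i, L (e i) (L (e i) A) := by
    intro A
    have step1 : L A w = ∑ i, (L (e i) ⁅A, e i⁆ + L (e i) (L (e i) A)
        + L ⁅A, e i⁆ (e i)) := by
      rw [hw, map_sum]
      refine Finset.sum_congr rfl fun i _ => ?_
      have hFi := congrArg (fun f : H →ₗ[ℝ] H => f (e i)) (hF A (e i))
      simp only [LinearMap.sub_apply, LinearMap.comp_apply] at hFi
      have hTi : L A (e i) = ⁅A, e i⁆ + L (e i) A := sub_eq_iff_eq_add.mp (hT A (e i))
      have : L A (L (e i) (e i)) = L ⁅A, e i⁆ (e i) + L (e i) (L A (e i)) := by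
        rw [hFi]; abel
      rw [this, hTi, map_add]; abel
    have hcancel : (∑ i, L (e i) ⁅A, e i⁆) + (∑ i, L ⁅A, e i⁆ (e i)) = 0 := by
      have h1 : ∑ i, L (e i) ⁅A, e i⁆
          = ∑ i, ∑ j, K ⁅A, e i⁆ (e j) • L (e i) (e j) :=
        Finset.sum_congr rfl fun i _ => hLexp₂ (e i) ⁅A, e i⁆
      have h2 : ∑ i, L ⁅A, e i⁆ (e i)
          = ∑ i, ∑ j, K ⁅A, e j⁆ (e i) • L (e i) (e j) := by
        calc ∑ i, L ⁅A, e i⁆ (e i)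
            = ∑ i, ∑ j, K ⁅A, e i⁆ (e j) • L (e j) (e i) :=
              Finset.sum_congr rfl fun i _ => hLexp₁ ⁅A, e i⁆ (e i)
          _ = ∑ j, ∑ i, K ⁅A, e i⁆ (e j) • L (e j) (e i) := Finset.sum_comm
      rw [h1, h2, ← Finset.sum_add_distrib]
      refine Finset.sum_eq_zero fun i _ => ?_
      rw [← Finset.sum_add_distrib]
      refine Finset.sum_eq_zero fun j _ => ?_
      rw [← add_smul, hc A i j, zero_smul]
    calc L A w = ∑ i, (L (e i) ⁅A, e i⁆ + L (e i) (L (e i) A) + L ⁅A, e i⁆ (e i)) :=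
          step1
      _ = ((∑ i, L (e i) ⁅A, e i⁆) + (∑ i, L ⁅A, e i⁆ (e i)))
            + ∑ i, L (e i) (L (e i) A) := by
          rw [Finset.sum_add_distrib, Finset.sum_add_distrib]; abel
      _ = ∑ i, L (e i) (L (e i) A) := by rw [hcancel, zero_add]
  -- operator identity : L w = ∑ i, L (e i) ∘ₗ L (e i) + ad w
  have hop : L w = (∑ i, L (e i) ∘ₗ L (e i)) + (LieAlgebra.ad ℝ H) w := by
    ext A
    simp only [LinearMap.add_apply, LinearMap.coe_sum, Finset.sum_apply,
      LinearMap.comp_apply, LieAlgebra.ad_apply]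
    have h3 : L w A = ⁅w, A⁆ + L A w := sub_eq_iff_eq_add.mp (hT w A)
    rw [h3, claim1 A]; abel
  -- traces
  have htr0 : LinearMap.trace ℝ H (L w) = 0 :=
    milnor_skew_trace Bb hBsymm hBpos (L w) (fun x y => hS w x y)
  have htrad : LinearMap.trace ℝ H ((LieAlgebra.ad ℝ H) w) = 0 := by
    refine milnor_skew_trace K hKsymm hKpos _ (fun x y => ?_)
    simpa only [LieAlgebra.ad_apply] using hKinv w x y
  have hsum : ∑ i, LinearMap.trace ℝ H (L (e i) ∘ₗ L (e i)) = 0 := by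
    have h4 := congrArg (LinearMap.trace ℝ H) hop
    rw [htr0, map_add, htrad, add_zero, map_sum] at h4
    exact h4.symm
  have hzero : ∀ i, L (e i) = 0 := by
    intro i
    refine (milnor_skew_sq_trace Bb hBsymm hBpos (L (e i))
      (fun x y => hS (e i) x y)).2 ?_
    have hnp : ∀ j ∈ Finset.univ,
        LinearMap.trace ℝ H (L (e j) ∘ₗ L (e j)) ≤ 0 :=
      fun j _ => (milnor_skew_sq_trace Bb hBsymm hBpos (L (e j))
        (fun x y => hS (e j) x y)).1
    exact (Finset.sum_eq_zero_iff_of_nonpos hnp).mp hsum i (Finset.mem_univ i)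
  intro x
  ext y
  rw [hLexp₁ x y]
  simp [hzero]

end Core
/-- **Milnor's characterization of flat Riemannian Lie groups.**
A finite-dimensional real Lie algebra with an inner product admits a flat
Levi-Civita product if and only if it decomposes as an orthogonal direct sum
`g = b ⊕ u` with `b` an abelian subalgebra, `u` an abelian ideal, and each
`ad_b` (`b ∈ b`) skew-adjoint with respect to the inner product. -/
theorem milnor_flat_characterization
    (g : Type*) [LieRing g] [LieAlgebra ℝ g] [FiniteDimensional ℝ g]
    (B : LinearMap.BilinForm ℝ g)
    (hsymm : ∀ x y : g, B x y = B y x)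
    (hpos : ∀ x : g, x ≠ 0 → 0 < B x x) :
    (∃ P : g →ₗ[ℝ] g →ₗ[ℝ] g,
        (∀ x y : g, P x y - P y x = ⁅x, y⁆) ∧
        (∀ x y z : g, B (P x y) z + B y (P x z) = 0) ∧
        (∀ x y : g, P ⁅x, y⁆ = P x ∘ₗ P y - P y ∘ₗ P x)) ↔
    (∃ (b : LieSubalgebra ℝ g) (u : LieIdeal ℝ g),
        (∀ x ∈ b, ∀ y ∈ b, ⁅x, y⁆ = (0 : g)) ∧
        (∀ x ∈ u, ∀ y ∈ u, ⁅x, y⁆ = (0 : g)) ∧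
        (∀ x ∈ b, ∀ y ∈ u, B x y = 0) ∧
        ((b : Submodule ℝ g) ⊔ (u : Submodule ℝ g) = ⊤) ∧
        ((b : Submodule ℝ g) ⊓ (u : Submodule ℝ g) = ⊥) ∧
        (∀ x ∈ b, ∀ y z : g, B ⁅x, y⁆ z + B y ⁅x, z⁆ = 0)) := by
  constructor
  · -- Forward direction
    rintro ⟨P, hT, hS, hF⟩
    set u : Submodule ℝ g := LinearMap.ker P with hu
    have hrefl : B.IsRefl := fun x y h => by rw [hsymm]; exact h
    have hmemu : ∀ x : g, x ∈ u ↔ P x = 0 := fun x => LinearMap.mem_ker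
    set bsm : Submodule ℝ g := LinearMap.BilinForm.orthogonal B u with hbsm
    have hmemb : ∀ x : g, x ∈ bsm ↔ ∀ n ∈ u, B n x = 0 := by
      intro x
      rw [hbsm, LinearMap.BilinForm.mem_orthogonal_iff]
    have hndeg : (B.restrict u).Nondegenerate := by
      refine ⟨fun x hx => ?_, fun x hx => ?_⟩
      all_goals
        have h1 : B ↑x ↑x = 0 := by simpa using hx x
        refine Subtype.ext (by_contra fun hne => ?_)
        exact (ne_of_gt (hpos _ hne)) h1
    have hcompl : IsCompl u bsm :=
      LinearMap.BilinForm.isCompl_orthogonal_of_restrict_nondegenerate hrefl hndeg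
    have hbr : ∀ x v : g, v ∈ u → ⁅x, v⁆ = P x v := by
      intro x v hv
      have hv0 : P v = 0 := (hmemu v).mp hv
      have h1 := hT x v
      rw [hv0] at h1
      simpa using h1.symm
    have hlieu : ∀ x v : g, v ∈ u → ⁅x, v⁆ ∈ u := by
      intro x v hv
      rw [hmemu, hF x v, (hmemu v).mp hv]
      ext z
      simp
    have hPu : ∀ x v : g, v ∈ u → P x v ∈ u := fun x v hv => by
      rw [← hbr x v hv]; exact hlieu x v hv
    have hPb : ∀ x : g, ∀ y ∈ bsm, P x y ∈ bsm := by
      intro x y hy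
      rw [hmemb]
      intro n hn
      have h2 := hS x y n
      have h4 : B (P x n) y = 0 := (hmemb y).mp hy _ (hPu x n hn)
      rw [hsymm n (P x y), hsymm (P x n) y] at *
      linarith
    let bs : LieSubalgebra ℝ g :=
      { bsm with
        lie_mem' := fun {x y} hx hy => by
          have h1 : ⁅x, y⁆ = P x y - P y x := (hT x y).symm
          rw [h1]
          exact Submodule.sub_mem _ (hPb x y hy) (hPb y x hx) }
    let us : LieIdeal ℝ g :=
      { u with lie_mem := fun {x m} hm => hlieu x m hm }
    -- invariant form K
    let K : LinearMap.BilinForm ℝ g := LinearMap.mk₂ ℝ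
      (fun x y => - LinearMap.trace ℝ g (P x ∘ₗ P y))
      (fun x x' y => by simp only [map_add, LinearMap.add_comp]; ring)
      (fun c x y => by simp only [map_smul, LinearMap.smul_comp, smul_eq_mul]; ring)
      (fun x y y' => by simp only [map_add, LinearMap.comp_add]; ring)
      (fun c x y => by simp only [map_smul, LinearMap.comp_smul, smul_eq_mul]; ring)
    have hKapp : ∀ x y : g, K x y = - LinearMap.trace ℝ g (P x ∘ₗ P y) :=
      fun x y => rfl
    have hKsymm : ∀ x y : g, K x y = K y x := by
      intro x y
      rw [hKapp, hKapp, ← Module.End.mul_eq_comp, ← Module.End.mul_eq_comp,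
        LinearMap.trace_mul_comm]
    have hKinv : ∀ x y z : g, K ⁅x, y⁆ z + K y ⁅x, z⁆ = 0 := by
      intro x y z
      rw [hKapp, hKapp, hF x y, hF x z]
      simp only [← Module.End.mul_eq_comp]
      have key := LinearMap.trace_mul_comm ℝ (P x) (P y * P z)
      simp only [sub_mul, mul_sub, map_sub, mul_assoc] at *
      linarith
    have hKposb : ∀ x : g, x ∈ bsm → x ≠ 0 → 0 < K x x := by
      intro x hx hne
      have hPx : P x ≠ 0 := by
        intro h0
        have hxu : x ∈ u ⊓ bsm := ⟨(hmemu x).mpr h0, hx⟩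
        rw [hcompl.inf_eq_bot] at hxu
        exact hne (by simpa using hxu)
      have hsq := milnor_skew_sq_trace B hsymm hpos (P x) (fun a b => hS x a b)
      have hne2 : LinearMap.trace ℝ g (P x ∘ₗ P x) ≠ 0 := fun h => hPx (hsq.2 h)
      have hlt : LinearMap.trace ℝ g (P x ∘ₗ P x) < 0 := lt_of_le_of_ne hsq.1 hne2
      rw [hKapp]
      linarith
    -- transfer to the subalgebra
    haveI : FiniteDimensional ℝ ↥bs := by
      show FiniteDimensional ℝ ↥bsm
      infer_instance
    let BH : LinearMap.BilinForm ℝ ↥bs := LinearMap.mk₂ ℝ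
      (fun x y => B ↑x ↑y)
      (fun x x' y => by
        show B ((x : g) + (x' : g)) _ = _; rw [map_add]; rfl)
      (fun c x y => by
        show B (c • (x : g)) _ = _; rw [map_smul]; rfl)
      (fun x y y' => by
        show B _ ((y : g) + (y' : g)) = _; rw [map_add])
      (fun c x y => by
        show B _ (c • (y : g)) = _; rw [map_smul])
    let KH : LinearMap.BilinForm ℝ ↥bs := LinearMap.mk₂ ℝ
      (fun x y => K ↑x ↑y)
      (fun x x' y => by
        show K ((x : g) + (x' : g)) _ = _; rw [map_add]; rfl)
      (fun c x y => by
        show K (c • (x : g)) _ = _; rw [map_smul]; rfl)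
      (fun x y y' => by
        show K _ ((y : g) + (y' : g)) = _; rw [map_add])
      (fun c x y => by
        show K _ (c • (y : g)) = _; rw [map_smul])
    have hmembs : ∀ x : ↥bs, (x : g) ∈ bsm := fun x => x.2
    let LH : ↥bs →ₗ[ℝ] ↥bs →ₗ[ℝ] ↥bs := LinearMap.mk₂ ℝ
      (fun x y => ⟨P ↑x ↑y, hPb ↑x ↑y (hmembs y)⟩)
      (fun x x' y => by
        apply Subtype.ext
        show P ((x : g) + (x' : g)) (y : g) = P (x : g) (y : g) + P (x' : g) (y : g)
        rw [map_add, LinearMap.add_apply])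
      (fun c x y => by
        apply Subtype.ext
        show P (c • (x : g)) (y : g) = c • P (x : g) (y : g)
        rw [map_smul, LinearMap.smul_apply])
      (fun x y y' => by
        apply Subtype.ext
        show P (x : g) ((y : g) + (y' : g)) = P (x : g) (y : g) + P (x : g) (y' : g)
        rw [map_add])
      (fun c x y => by
        apply Subtype.ext
        show P (x : g) (c • (y : g)) = c • P (x : g) (y : g)
        rw [map_smul])
    have hLHapp : ∀ x y : ↥bs, (↑(LH x y) : g) = P ↑x ↑y := fun x y => rfl
    have hcore : ∀ x : ↥bs, LH x = 0 := by
      apply milnor_core BH KH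
      · intro x y; exact hsymm ↑x ↑y
      · intro x hx
        refine hpos ↑x (fun h0 => hx (Subtype.ext h0))
      · intro x y; exact hKsymm ↑x ↑y
      · intro x hx
        exact hKposb ↑x (hmembs x) (fun h0 => hx (Subtype.ext h0))
      · intro x y z
        have := hKinv ↑x ↑y ↑z
        rwa [← LieSubalgebra.coe_bracket, ← LieSubalgebra.coe_bracket] at this
      · intro x y
        apply Subtype.ext
        rw [AddSubgroupClass.coe_sub, hLHapp, hLHapp, LieSubalgebra.coe_bracket]
        exact hT ↑x ↑y
      · intro x y z; exact hS ↑x ↑y ↑z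
      · intro x y
        ext z
        rw [LinearMap.sub_apply, LinearMap.comp_apply, LinearMap.comp_apply,
          AddSubgroupClass.coe_sub, hLHapp, hLHapp, hLHapp, hLHapp, hLHapp,
          LieSubalgebra.coe_bracket, hF x y]
        simp
    have hPbb : ∀ x ∈ bsm, ∀ y ∈ bsm, P x y = 0 := by
      intro x hx y hy
      have h1 := congrArg (fun f : ↥bs →ₗ[ℝ] ↥bs => ((f ⟨y, hy⟩ : ↥bs) : g))
        (hcore ⟨x, hx⟩)
      simpa [hLHapp] using h1
    have htop : ∀ w : g, ∃ wb ∈ bsm, ∃ wu ∈ u, w = wb + wu := by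
      intro w
      have hw : w ∈ bsm ⊔ u := by
        rw [sup_comm, hcompl.sup_eq_top]; trivial
      obtain ⟨wb, hwb, wu, hwu, h⟩ := Submodule.mem_sup.mp hw
      exact ⟨wb, hwb, wu, hwu, h.symm⟩
    have hPxb : ∀ x : g, ∀ y ∈ bsm, P x y = 0 → True := fun _ _ _ _ => trivial
    have hPyx0 : ∀ x ∈ bsm, ∀ y : g, P y x = 0 := by
      intro x hx y
      obtain ⟨yb, hyb, yu, hyu, rfl⟩ := htop y
      rw [map_add, LinearMap.add_apply, hPbb yb hyb x hx, (hmemu yu).mp hyu]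
      simp
    have hbrb : ∀ x ∈ bsm, ∀ y : g, ⁅x, y⁆ = P x y := by
      intro x hx y
      rw [← hT x y, hPyx0 x hx y, sub_zero]
    refine ⟨bs, us, ?_, ?_, ?_, ?_, ?_, ?_⟩
    · intro x hx y hy
      rw [← hT x y, hPbb x hx y hy, hPbb y hy x hx, sub_zero]
    · intro x hx y hy
      rw [← hT x y, (hmemu x).mp hx, (hmemu y).mp hy]
      simp
    · intro x hx y hy
      rw [hsymm]
      exact (hmemb x).mp hx y hy
    · show bsm ⊔ u = ⊤
      rw [sup_comm]; exact hcompl.sup_eq_top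
    · show bsm ⊓ u = ⊥
      rw [inf_comm]; exact hcompl.inf_eq_bot
    · intro x hx y z
      rw [hbrb x hx y, hbrb x hx z]
      exact hS x y z
  · -- Backward direction
    rintro ⟨bs, us, h1, h2, h3, h4, h5, h6⟩
    have hcompl : IsCompl (bs : Submodule ℝ g) (us : Submodule ℝ g) :=
      ⟨disjoint_iff.mpr h5, codisjoint_iff.mpr h4⟩
    set π := Submodule.projectionOnto _ _ hcompl with hπ
    have hπb : ∀ x : g, ((π x : g)) ∈ bs := fun x => (π x).2
    have hπu : ∀ x : g, x - ↑(π x) ∈ us := by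
      intro x
      have hx : x ∈ (bs : Submodule ℝ g) ⊔ (us : Submodule ℝ g) := by
        rw [h4]; trivial
      obtain ⟨a, ha, c, hc, hac⟩ := Submodule.mem_sup.mp hx
      have hπx : π x = ⟨a, ha⟩ := by
        rw [← hac, map_add,
          show π a = ⟨a, ha⟩ from
            Submodule.projectionOnto_apply_left hcompl ⟨a, ha⟩,
          show π c = 0 from
            Submodule.projectionOnto_apply_of_mem_right hcompl hc,
          add_zero]
      rw [hπx]
      have : x - a = c := by rw [← hac]; abel
      rw [show ((⟨a, ha⟩ : (bs : Submodule ℝ g)) : g) = a from rfl, this]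
      exact hc
    have hxq : ∀ x : g, (↑(π x) : g) + (x - ↑(π x)) = x := fun x => by abel
    let P : g →ₗ[ℝ] g →ₗ[ℝ] g := LinearMap.mk₂ ℝ
      (fun x y => ⁅(↑(π x) : g), y⁆)
      (fun x x' y => by simp only [map_add, Submodule.coe_add, add_lie])
      (fun c x y => by simp only [map_smul, SetLike.val_smul, smul_lie])
      (fun x y y' => by simp only [lie_add])
      (fun c x y => by simp only [lie_smul])
    have hPapp : ∀ x y : g, P x y = ⁅(↑(π x) : g), y⁆ := fun x y => rfl
    have key : ∀ a xu b' yu : g, a ∈ bs → b' ∈ bs → xu ∈ us → yu ∈ us →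
        ⁅a, b' + yu⁆ - ⁅b', a + xu⁆ = ⁅a + xu, b' + yu⁆ := by
      intro a xu b' yu ha hb hxu hyu
      rw [lie_add, lie_add, add_lie, lie_add, lie_add, h1 _ ha _ hb,
        h1 _ hb _ ha, h2 _ hxu _ hyu, ← lie_skew b' xu]
      abel
    have htor : ∀ x y : g, ⁅(↑(π x) : g), y⁆ - ⁅(↑(π y) : g), x⁆ = ⁅x, y⁆ := by
      intro x y
      have h := key (↑(π x)) (x - ↑(π x)) (↑(π y)) (y - ↑(π y))
        (hπb x) (hπb y) (hπu x) (hπu y)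
      rwa [hxq x, hxq y] at h
    have hred : ∀ y : g, ∀ a, a ∈ bs → ⁅a, y⁆ = ⁅a, y - ↑(π y)⁆ := by
      intro y a ha
      have h : ⁅a, y⁆ = ⁅a, (↑(π y) : g) + (y - ↑(π y))⁆ := by rw [hxq y]
      rw [h, lie_add, h1 _ ha _ (hπb y), zero_add]
    refine ⟨P, ?_, ?_, ?_⟩
    · intro x y
      rw [hPapp, hPapp]
      exact htor x y
    · intro x y z
      rw [hPapp, hPapp]
      exact h6 _ (hπb x) y z
    · intro x y
      have hlieuxy : ⁅x, y⁆ ∈ us := by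
        have h := htor x y
        rw [hred y _ (hπb x), hred x _ (hπb y)] at h
        rw [← h]
        exact sub_mem (us.lie_mem (hπu y)) (us.lie_mem (hπu x))
      have hπ0 : (↑(π ⁅x, y⁆) : g) = 0 := by
        rw [Submodule.projectionOnto_apply_of_mem_right hcompl hlieuxy]
        rfl
      ext z
      rw [LinearMap.sub_apply, LinearMap.comp_apply, LinearMap.comp_apply,
        hPapp, hPapp, hPapp, hPapp, hPapp, hπ0, zero_lie, ← lie_lie,
        h1 _ (hπb x) _ (hπb y), zero_lie]
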